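/- If a linear separating tree for a problem X has the direct-type property (for every inner node B and every clique Y ⊆ X, min{|R_B⁺ ∩ Y|, |R_B⁻ ∩ Y|} ≤ 1), then its height is at least ω(X) − 1, where ω(X) is the maximum size of a clique of pairwise adjacent solutions in X. -/
import Mathlib


/-- A finite binary tree with leaves labelled by elements of `α`: an abstract
model of a linear separating tree. -/
inductive BTree (α : Type) where
  | leaf : α → BTree α
  | node : BTree α → BTree α → BTree α

/-- The set of labels occurring at the leaves of a tree. -/
def BTree.leaves {α : Type} [DecidableEq α] : BTree α → Finset α
  | .leaf a => {a}
  | .node l r => l.leaves ∪ r.leaves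

/-- The height of a tree (number of comparisons on a longest root-leaf path). -/
def BTree.height {α : Type} : BTree α → ℕ
  | .leaf _ => 0
  | .node l r => max l.height r.height + 1

/-- The direct-type condition: at every inner node `B` with children leaf-label
sets `X_B⁺` (left) and `X_B⁻` (right), for every clique `Y ⊆ X` with respect to
`adj` we have `min |R_B⁺ ∩ Y| |R_B⁻ ∩ Y| ≤ 1`, where `R_B⁺ = X_B⁻ \ X_B⁺` and
`R_B⁻ = X_B⁺ \ X_B⁻`. -/
def BTree.DirectType {α : Type} [DecidableEq α]
    (adj : α → α → Prop) (X : Finset α) : BTree α → Prop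
  | .leaf _ => True
  | .node l r =>
      (∀ Y : Finset α, Y ⊆ X → (∀ a ∈ Y, ∀ b ∈ Y, a ≠ b → adj a b) →
        min ((r.leaves \ l.leaves) ∩ Y).card ((l.leaves \ r.leaves) ∩ Y).card ≤ 1) ∧
      l.DirectType adj X ∧ r.DirectType adj X

theorem stmt18_aux {α : Type} [DecidableEq α]
    (adj : α → α → Prop) (X : Finset α) (T : BTree α)
    (hD : T.DirectType adj X)
    (Y : Finset α) (hYX : Y ⊆ X)
    (hclq : ∀ a ∈ Y, ∀ b ∈ Y, a ≠ b → adj a b)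
    (hYT : Y ⊆ T.leaves) :
    Y.card ≤ T.height + 1 := by
  induction T generalizing Y with
  | leaf a =>
      simp only [BTree.leaves] at hYT
      simpa [BTree.height] using Finset.card_le_card hYT
  | node l r ihl ihr =>
      obtain ⟨h1, hl, hr⟩ := hD
      have hmin := h1 Y hYX hclq
      have hYlr : Y ⊆ l.leaves ∪ r.leaves := hYT
      have e1 : (r.leaves \ l.leaves) ∩ Y = Y \ l.leaves := by
        ext x
        simp only [Finset.mem_inter, Finset.mem_sdiff]
        constructor
        · rintro ⟨⟨_, h⟩, hy⟩; exact ⟨hy, h⟩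
        · rintro ⟨hy, h⟩
          rcases Finset.mem_union.mp (hYlr hy) with h' | h'
          · exact absurd h' h
          · exact ⟨⟨h', h⟩, hy⟩
      have e2 : (l.leaves \ r.leaves) ∩ Y = Y \ r.leaves := by
        ext x
        simp only [Finset.mem_inter, Finset.mem_sdiff]
        constructor
        · rintro ⟨⟨_, h⟩, hy⟩; exact ⟨hy, h⟩
        · rintro ⟨hy, h⟩
          rcases Finset.mem_union.mp (hYlr hy) with h' | h'
          · exact ⟨⟨h', h⟩, hy⟩
          · exact absurd h' h
      rw [e1, e2] at hmin
      rcases min_le_iff.mp hmin with hle | hle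
      · -- |Y \ l| ≤ 1 : recurse into l with Y ∩ l.leaves
        have hsub : Y ∩ l.leaves ⊆ Y := Finset.inter_subset_left
        have := ihl hl (Y ∩ l.leaves) (hsub.trans hYX)
          (fun a ha b hb hab => hclq a (hsub ha) b (hsub hb) hab)
          Finset.inter_subset_right
        have hsplit : Y.card = (Y ∩ l.leaves).card + (Y \ l.leaves).card :=
          (Finset.card_inter_add_card_sdiff Y l.leaves).symm
        have : Y.card ≤ l.height + 1 + 1 := by omega
        simp only [BTree.height]
        omega
      · have hsub : Y ∩ r.leaves ⊆ Y := Finset.inter_subset_left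
        have := ihr hr (Y ∩ r.leaves) (hsub.trans hYX)
          (fun a ha b hb hab => hclq a (hsub ha) b (hsub hb) hab)
          Finset.inter_subset_right
        have hsplit : Y.card = (Y ∩ r.leaves).card + (Y \ r.leaves).card :=
          (Finset.card_inter_add_card_sdiff Y r.leaves).symm
        simp only [BTree.height]
        omega

/-- Bondarenko's height bound: a direct-type linear separating tree in which
every solution of `X` occurs as a leaf label has height at least `|Y| - 1`
for every clique `Y ⊆ X`, hence at least `ω(X) - 1`. -/
theorem stmt18 {α : Type} [DecidableEq α]
    (adj : α → α → Prop) (X : Finset α) (T : BTree α)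
    (hX : X ⊆ T.leaves) (hD : T.DirectType adj X)
    (Y : Finset α) (hYX : Y ⊆ X)
    (hclq : ∀ a ∈ Y, ∀ b ∈ Y, a ≠ b → adj a b) :
    Y.card - 1 ≤ T.height := by
  have := stmt18_aux adj X T hD Y hYX hclq (hYX.trans hX)
  omega
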